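/- Let {a_λ}_{λ∈Λ} be a generating set of A as a k-algebra. Write a₊ = (a + θ(a))/2 and a₋ = (a − θ(a))/2. Then the fixed subalgebra A^θ is generated as a k-algebra by the elements a_{λ+} and the products a_{λ−}·a_{μ−} for λ, μ ∈ Λ. -/

import Mathlib

/-!
STATEMENT 6: if `{a_λ}_{λ∈Λ}` generates `A` as a `k`-algebra, then the fixed
subalgebra `A^θ` is generated as a `k`-algebra by the elements
`a_{λ+} = (a_λ + θ a_λ)/2` and the products `a_{λ-}·a_{μ-}`, where
`a_{λ-} = (a_λ - θ a_λ)/2`. -/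
theorem fixedSubalgebra_generators
    (k A Λ : Type*) [CommRing k] [CommRing A] [Algebra k A] [Invertible (2 : k)]
    (θ : A →ₐ[k] A) (hθ : θ.comp θ = AlgHom.id k A)
    (a : Λ → A) (hgen : Algebra.adjoin k (Set.range a) = ⊤) :
    Algebra.adjoin k
      ((Set.range fun l => (⅟(2 : k)) • (a l + θ (a l))) ∪
       (Set.range fun p : Λ × Λ =>
          ((⅟(2 : k)) • (a p.1 - θ (a p.1))) * ((⅟(2 : k)) • (a p.2 - θ (a p.2)))))
      = AlgHom.equalizer θ (AlgHom.id k A) := by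
  have hθθ : ∀ x, θ (θ x) = x := fun x => AlgHom.congr_fun hθ x
  set pl : Λ → A := fun l => (⅟(2 : k)) • (a l + θ (a l)) with hpl
  set ml : Λ → A := fun l => (⅟(2 : k)) • (a l - θ (a l)) with hml
  have hθp : ∀ l, θ (pl l) = pl l := by
    intro l; simp [hpl, map_smul, map_add, hθθ, add_comm]
  have hθm : ∀ l, θ (ml l) = - ml l := by
    intro l
    simp only [hml, map_smul, map_sub, hθθ, ← smul_neg, neg_sub]
  set S : Set A := (Set.range pl) ∪
      (Set.range fun p : Λ × Λ => (ml p.1) * (ml p.2)) with hS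
  set B := Algebra.adjoin k S with hB
  have hSfix : ∀ s ∈ S, θ s = s := by
    rintro s (⟨l, rfl⟩ | ⟨⟨l, l'⟩, rfl⟩)
    · exact hθp l
    · simp [map_mul, hθm]
  have hBle : B ≤ AlgHom.equalizer θ (AlgHom.id k A) := by
    apply Algebra.adjoin_le
    intro s hs
    rw [SetLike.mem_coe, AlgHom.mem_equalizer]
    exact hSfix s hs
  have hBfix : ∀ x ∈ B, θ x = x := fun x hx => hBle hx
  set M : Submodule k A := Submodule.span k (Set.range ml) with hM
  have hθM : ∀ x ∈ M, θ x = - x := by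
    intro x hx
    induction hx using Submodule.span_induction with
    | mem y hy => obtain ⟨l, rfl⟩ := hy; exact hθm l
    | zero => simp
    | add y z _ _ hy hz => simp [map_add, hy, hz]; ring
    | smul c y _ hy => simp [map_smul, hy]
  set BM := Subalgebra.toSubmodule B with hBM
  have hBB : BM * BM ≤ BM := by
    rw [Submodule.mul_le]
    intro x hx y hy
    exact B.mul_mem hx hy
  have hMM : M * M ≤ BM := by
    rw [hM, Submodule.span_mul_span, Submodule.span_le]
    rintro x ⟨y, ⟨l, rfl⟩, z, ⟨l', rfl⟩, rfl⟩
    exact Algebra.subset_adjoin (Or.inr ⟨(l, l'), rfl⟩)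
  set N : Submodule k A := BM ⊔ BM * M with hN
  have hBleN : BM ≤ N := le_sup_left
  have hNN : N * N ≤ N := by
    rw [hN, Submodule.sup_mul, Submodule.mul_sup, Submodule.mul_sup]
    apply sup_le <;> apply sup_le
    · exact hBB.trans le_sup_left
    · calc BM * (BM * M) = (BM * BM) * M := (mul_assoc _ _ _).symm
        _ ≤ BM * M := mul_le_mul' hBB le_rfl
        _ ≤ N := le_sup_right
    · calc (BM * M) * BM = (BM * BM) * M := by ring
        _ ≤ BM * M := mul_le_mul' hBB le_rfl
        _ ≤ N := le_sup_right
    · calc (BM * M) * (BM * M) = (BM * BM) * (M * M) := by ring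
        _ ≤ BM * BM := mul_le_mul' hBB hMM
        _ ≤ BM := hBB
        _ ≤ N := le_sup_left
  have haN : ∀ l, a l ∈ N := by
    intro l
    have hdecomp : a l = pl l + ml l := by
      rw [hpl, hml]
      simp only [← smul_add]
      rw [show a l + θ (a l) + (a l - θ (a l)) = (2 : k) • a l by
        rw [two_smul]; ring]
      rw [smul_smul, invOf_mul_self, one_smul]
    rw [hdecomp]
    apply Submodule.add_mem
    · exact hBleN (Algebra.subset_adjoin (Or.inl ⟨l, rfl⟩))
    · have h1 : (1 : A) * ml l ∈ BM * M :=
        Submodule.mul_mem_mul B.one_mem (Submodule.subset_span ⟨l, rfl⟩)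
      rw [one_mul] at h1
      exact (le_sup_right : BM * M ≤ N) h1
  have hNtop : ∀ x : A, x ∈ N := by
    intro x
    have hx : x ∈ Algebra.adjoin k (Set.range a) := by rw [hgen]; trivial
    induction hx using Algebra.adjoin_induction with
    | mem y hy => obtain ⟨l, rfl⟩ := hy; exact haN l
    | algebraMap r => exact hBleN (B.algebraMap_mem r)
    | add y z _ _ hy hz => exact N.add_mem hy hz
    | mul y z _ _ hy hz => exact hNN (Submodule.mul_mem_mul hy hz)
  apply le_antisymm
  · apply Algebra.adjoin_le
    intro s hs
    rw [SetLike.mem_coe, AlgHom.mem_equalizer]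
    exact hSfix s hs
  · intro x hx
    rw [AlgHom.mem_equalizer] at hx
    obtain ⟨b, hb, c, hc, hbc⟩ := Submodule.mem_sup.mp (hNtop x)
    have hθc : θ c = - c :=
      Submodule.mul_induction_on (C := fun t => θ t = -t) hc
        (fun y hy z hz => by show θ (y * z) = -(y * z); rw [map_mul, hBfix y hy, hθM z hz, mul_neg])
        (fun y z hy hz => by show θ (y + z) = -(y + z); rw [map_add, hy, hz, neg_add])
    have hc0 : c = 0 := by
      rw [AlgHom.id_apply, ← hbc] at hx
      have h1 : b + c = b - c := by
        conv_lhs => rw [← hx]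
        rw [map_add, hBfix b hb, hθc]
        ring
      have h2 : c + c = 0 := by linear_combination h1
      calc c = ⅟(2:k) • ((2:k) • c) := by rw [smul_smul, invOf_mul_self, one_smul]
        _ = ⅟(2:k) • (c + c) := by rw [two_smul]
        _ = 0 := by rw [h2, smul_zero]
    rw [← hbc, hc0, add_zero]
    exact hb
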